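/- If m is odd, then (I_m − M^{-1} N)² = I_m, where N is the m×m matrix with (0,0)-entry 1 and other entries 0. -/

import Mathlib

open Matrix

/-- α_j = 1/(8j²−2). -/
noncomputable def alph (j : ℕ) : ℝ := 1 / (8 * (j : ℝ) ^ 2 - 2)

/-- The m×m tridiagonal matrix M with M₀₀ = 1/2, M_{j-1,j} = −α_j, M_{j,j-1} = α_j. -/
noncomputable def Mmat (m : ℕ) : Matrix (Fin m) (Fin m) ℝ :=
  Matrix.of fun i j =>
    if (i : ℕ) = 0 ∧ (j : ℕ) = 0 then 1 / 2
    else if (i : ℕ) + 1 = (j : ℕ) then - alph (j : ℕ)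
    else if (j : ℕ) + 1 = (i : ℕ) then alph (i : ℕ)
    else 0

/-- The m×m matrix N = e₀ e₀ᵀ. -/
noncomputable def Nmat (m : ℕ) : Matrix (Fin m) (Fin m) ℝ :=
  Matrix.of fun i j => if (i : ℕ) = 0 ∧ (j : ℕ) = 0 then 1 else 0

/-- The vector v: v_j = 2(2j+1) for even j (0 else) when m is odd;
    v_j = −2(2j+1) for odd j (0 else) when m is even. -/
noncomputable def vVec (m : ℕ) : Fin m → ℝ := fun j =>
  if Odd m then (if Even (j : ℕ) then 2 * (2 * (j : ℝ) + 1) else 0)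
  else (if Odd (j : ℕ) then -2 * (2 * (j : ℝ) + 1) else 0)

/-- The standard basis vector e₀. -/
noncomputable def e0vec (m : ℕ) : Fin m → ℝ := fun i => if (i : ℕ) = 0 then 1 else 0

/-- if m is odd then (I − M⁻¹N)² = I. -/
lemma Mv_eq_e0 (m : ℕ) (hm : 1 ≤ m) (hodd : Odd m) :
    Mmat m *ᵥ vVec m = e0vec m := by
  funext i
  rw [mulVec, dotProduct]
  rcases Nat.even_or_odd (i : ℕ) with hie | hio
  · rcases eq_or_ne (i : ℕ) 0 with h0 | h0
    · -- row 0
      rw [Finset.sum_eq_single (⟨0, hm⟩ : Fin m)]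
      · norm_num [Mmat, vVec, e0vec, h0, hodd]
      · intro j _ hj
        have hj0 : (j : ℕ) ≠ 0 := by
          intro h; apply hj; exact Fin.ext (by simp [h])
        rcases Nat.even_or_odd (j : ℕ) with hje | hjo
        · have : ¬ ((i:ℕ) + 1 = (j:ℕ)) := by
            intro h; rw [h0] at h
            rcases hje with ⟨k, hk⟩; omega
          have h2 : ¬ ((j:ℕ) + 1 = (i:ℕ)) := by omega
          simp [Mmat, this, h2, hj0]
        · have : ¬ Even (j : ℕ) := Nat.not_even_iff_odd.mpr hjo
          simp [vVec, hodd, this]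
      · intro h; exact absurd (Finset.mem_univ _) h
    · -- even row, not 0
      rw [show e0vec m i = 0 by simp [e0vec, h0]]
      apply Finset.sum_eq_zero
      intro j _
      rcases Nat.even_or_odd (j : ℕ) with hje | hjo
      · have h1 : ¬ ((i:ℕ) = 0 ∧ (j:ℕ) = 0) := by tauto
        have h2 : ¬ ((i:ℕ) + 1 = (j:ℕ)) := by
          rcases hie with ⟨a, ha⟩; rcases hje with ⟨b, hb⟩; omega
        have h3 : ¬ ((j:ℕ) + 1 = (i:ℕ)) := by
          rcases hie with ⟨a, ha⟩; rcases hje with ⟨b, hb⟩; omega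
        simp [Mmat, h1, h2, h3]
      · have : ¬ Even (j : ℕ) := Nat.not_even_iff_odd.mpr hjo
        simp [vVec, hodd, this]
  · -- odd row i
    have hi0 : (i : ℕ) ≠ 0 := by rcases hio with ⟨k, hk⟩; omega
    have hilt : (i : ℕ) + 1 < m := by
      have h1 := i.isLt
      have h2 := Nat.odd_iff.mp hio
      have h3 := Nat.odd_iff.mp hodd
      omega
    set P : Fin m := ⟨(i:ℕ) - 1, by omega⟩ with hP
    set Q : Fin m := ⟨(i:ℕ) + 1, by omega⟩ with hQ
    have hPval : (P : ℕ) = (i : ℕ) - 1 := rfl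
    have hQval : (Q : ℕ) = (i : ℕ) + 1 := rfl
    have hio' := Nat.odd_iff.mp hio
    have hiP : Even ((P : ℕ)) := Nat.even_iff.mpr (by omega)
    have hiQ : Even ((Q : ℕ)) := Nat.even_iff.mpr (by omega)
    have key : ∀ j : Fin m, Mmat m i j * vVec m j =
        (if j = P then alph (i:ℕ) * (2 * (2 * ((i:ℝ) - 1) + 1)) else 0) +
        (if j = Q then (- alph ((i:ℕ) + 1)) * (2 * (2 * ((i:ℝ) + 1) + 1)) else 0) := by
      intro j
      have hPQ : P ≠ Q := by
        intro h
        have := congrArg (Fin.val) h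
        omega
      by_cases hjP : j = P
      · subst hjP
        have h1 : ¬ ((i:ℕ) = 0 ∧ ((P:ℕ)) = 0) := by tauto
        have h2 : ¬ ((i:ℕ) + 1 = (P : ℕ)) := by omega
        have h3 : (P : ℕ) + 1 = (i:ℕ) := by omega
        have hcast : ((P : ℕ) : ℝ) = (i : ℝ) - 1 := by
          rw [hPval]
          push_cast [Nat.cast_sub (by omega : 1 ≤ (i:ℕ))]
          ring
        rw [show Mmat m i P = alph (i:ℕ) by
          simp only [Mmat, Matrix.of_apply]
          rw [if_neg h1, if_neg h2, if_pos h3]]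
        rw [if_pos rfl, if_neg hPQ, add_zero]
        simp only [vVec, if_pos hodd, if_pos hiP, hcast]
      · by_cases hjQ : j = Q
        · subst hjQ
          have h1 : ¬ ((i:ℕ) = 0 ∧ ((Q:ℕ)) = 0) := by tauto
          have h2 : (i:ℕ) + 1 = (Q : ℕ) := by omega
          have hcast : ((Q : ℕ) : ℝ) = (i : ℝ) + 1 := by rw [hQval]; push_cast; ring
          have hMQ : Mmat m i Q = - alph ((i:ℕ) + 1) := by
            simp only [Mmat, Matrix.of_apply]
            rw [if_neg h1]
            rw [if_pos h2, hQval]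
          rw [hMQ, if_neg (Ne.symm hPQ), if_pos rfl, zero_add]
          simp only [vVec, if_pos hodd, if_pos hiQ, hcast]
        · rcases Nat.even_or_odd (j : ℕ) with hje | hjo
          · have h1 : ¬ ((i:ℕ) = 0 ∧ ((j:ℕ)) = 0) := by tauto
            have h2 : ¬ ((i:ℕ) + 1 = (j : ℕ)) := by
              intro h; exact hjQ (Fin.ext (by omega))
            have h3 : ¬ ((j : ℕ) + 1 = (i:ℕ)) := by
              intro h; exact hjP (Fin.ext (by omega))
            simp [Mmat, h1, h2, h3, hjP, hjQ]
          · have : ¬ Even (j : ℕ) := Nat.not_even_iff_odd.mpr hjo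
            simp [vVec, hodd, this, hjP, hjQ]
    rw [Finset.sum_congr rfl (fun j _ => key j), Finset.sum_add_distrib,
      Finset.sum_ite_eq' Finset.univ P, Finset.sum_ite_eq' Finset.univ Q]
    simp only [Finset.mem_univ, if_true]
    rw [show e0vec m i = 0 by simp [e0vec, hi0]]
    have h1 : (8 * (i:ℝ)^2 - 2) ≠ 0 := by
      have : (1:ℝ) ≤ (i:ℕ) := by exact_mod_cast Nat.one_le_iff_ne_zero.mpr hi0
      nlinarith
    have h2 : (8 * ((i:ℝ)+1)^2 - 2) ≠ 0 := by
      have : (0:ℝ) ≤ (i:ℕ) := Nat.cast_nonneg _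
      nlinarith
    rw [alph, alph]
    push_cast
    field_simp
    ring

theorem sq_one_sub_MinvN_of_odd (m : ℕ) (hm : 1 ≤ m) (hodd : Odd m) :
    (1 - (Mmat m)⁻¹ * Nmat m) ^ 2 = 1 := by
  by_cases hdet : IsUnit (Mmat m).det
  · have hinv : (Mmat m)⁻¹ *ᵥ e0vec m = vVec m := by
      rw [← Mv_eq_e0 m hm hodd, mulVec_mulVec, Matrix.nonsing_inv_mul _ hdet, one_mulVec]
    have h00 : (Mmat m)⁻¹ ⟨0, hm⟩ ⟨0, hm⟩ = 2 := by
      have := congrFun hinv ⟨0, hm⟩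
      rw [mulVec, dotProduct, Finset.sum_eq_single (⟨0, hm⟩ : Fin m)] at this
      · simpa [e0vec, vVec, hodd] using this
      · intro j _ hj
        have : (j : ℕ) ≠ 0 := fun h => hj (Fin.ext (by simp [h]))
        simp [e0vec, this]
      · intro h; exact absurd (Finset.mem_univ _) h
    set A := (Mmat m)⁻¹ * Nmat m with hA
    have hAent : ∀ i j : Fin m, A i j =
        if (j : ℕ) = 0 then (Mmat m)⁻¹ i ⟨0, hm⟩ else 0 := by
      intro i j
      rw [hA, Matrix.mul_apply]
      by_cases hj : (j : ℕ) = 0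
      · rw [if_pos hj, Finset.sum_eq_single (⟨0, hm⟩ : Fin m)]
        · simp [Nmat, hj]
        · intro k _ hk
          have : (k : ℕ) ≠ 0 := fun h => hk (Fin.ext (by simp [h]))
          simp [Nmat, this]
        · intro h; exact absurd (Finset.mem_univ _) h
      · rw [if_neg hj]
        apply Finset.sum_eq_zero
        intro k _
        simp [Nmat, hj]
    have hAA : A * A = A + A := by
      ext i j
      rw [Matrix.mul_apply, Finset.sum_eq_single (⟨0, hm⟩ : Fin m)]
      · rw [hAent i ⟨0, hm⟩, hAent ⟨0, hm⟩ j, Matrix.add_apply, hAent i j]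
        by_cases hj : (j : ℕ) = 0
        · rw [h00]; simp [hj]; ring
        · simp [hj]
      · intro k _ hk
        have : (k : ℕ) ≠ 0 := fun h => hk (Fin.ext (by simp [h]))
        rw [hAent i k, if_neg this, zero_mul]
      · intro h; exact absurd (Finset.mem_univ _) h
    calc (1 - A) ^ 2 = 1 - A - A + A * A := by noncomm_ring
    _ = 1 := by rw [hAA]; noncomm_ring
  · rw [Matrix.nonsing_inv_apply_not_isUnit _ hdet]
    simp [one_pow]
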